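/- For every x > 0, the function r ↦ r²·(K₀(r)² − K₁(r)²) is differentiable at x with derivative 2x·K₀(x)²; that is, (d/dr) r²[K₀(r)² − K₁(r)²] = 2r·K₀(r)² for all r > 0. -/

import Mathlib

open MeasureTheory Set

/-- The Macdonald function `K_ν(x) = (x^ν / 2^(ν+1)) ∫₀^∞ e^{-s - x²/(4s)} s^{-ν-1} ds`. -/
noncomputable def besselK (ν x : ℝ) : ℝ :=
  (x ^ ν / 2 ^ (ν + 1)) *
    ∫ s in Set.Ioi (0 : ℝ), Real.exp (-s - x ^ 2 / (4 * s)) * s ^ (-ν - 1)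

open MeasureTheory Set Real Filter Topology Metric

lemma pow_fact_le_exp (t : ℝ) (ht : 0 ≤ t) (m : ℕ) : t ^ m / m.factorial ≤ Real.exp t := by
  calc t ^ m / m.factorial ≤ ∑ i ∈ Finset.range (m+1), t ^ i / i.factorial := by
        refine Finset.single_le_sum (f := fun i => t ^ i / (i.factorial : ℝ)) ?_ (Finset.self_mem_range_succ m)
        intro i _
        positivity
    _ ≤ Real.exp t := Real.sum_le_exp_of_nonneg ht _

lemma exp_neg_div_le (a s : ℝ) (ha : 0 < a) (hs : 0 < s) (m : ℕ) :
    Real.exp (-(a/s)) ≤ m.factorial * (s/a) ^ m := by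
  have h := pow_fact_le_exp (a/s) (by positivity) m
  rw [Real.exp_neg, inv_le_comm₀ (Real.exp_pos _) (by positivity)]
  rw [div_le_iff₀ (by positivity : (0:ℝ) < (m.factorial:ℝ))] at h
  calc (↑m.factorial * (s / a) ^ m)⁻¹ = (a/s)^m / m.factorial * ((s/a)^m * (a/s)^m)⁻¹ := by
        rw [div_pow, div_pow]
        field_simp
    _ = (a/s)^m / m.factorial := by
        rw [div_pow, div_pow]
        field_simp
    _ ≤ Real.exp (a/s) := pow_fact_le_exp _ (by positivity) m

lemma contOn_aux (a : ℝ) (n : ℤ) :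
    ContinuousOn (fun s : ℝ => Real.exp (-s - a/s) * s ^ n) (Ioi 0) := by
  intro s hs
  have hs0 : s ≠ 0 := ne_of_gt hs
  apply ContinuousAt.continuousWithinAt
  exact (Real.continuous_exp.continuousAt.comp
    ((continuousAt_id.neg).sub (continuousAt_const.div continuousAt_id hs0))).mul
    (continuousAt_zpow₀ s n (Or.inl hs0))

lemma integrable_aux (a : ℝ) (ha : 0 < a) (n : ℤ) :
    IntegrableOn (fun s : ℝ => Real.exp (-s - a/s) * s ^ n) (Ioi 0) := by
  set m : ℕ := (1 - n).toNat with hm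
  have hmn : 1 ≤ (m : ℤ) + n := by
    rcases le_or_gt n 1 with h | h
    · have : (m : ℤ) = 1 - n := Int.toNat_of_nonneg (by omega)
      omega
    · have : (m : ℤ) = 0 := by simp [hm]; omega
      omega
  set C : ℝ := m.factorial / a ^ m with hC
  have hp : (0:ℝ) < ((m:ℤ) + n : ℤ) + 1 := by
    have : (1:ℝ) ≤ ((m:ℤ) + n : ℤ) := by exact_mod_cast hmn
    linarith
  have hg : IntegrableOn (fun s : ℝ => C * (Real.exp (-s) * s ^ ((((m:ℤ) + n : ℤ) : ℝ)))) (Ioi 0) := by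
    have := (Real.GammaIntegral_convergent hp).const_mul C
    refine this.congr (Eventually.of_forall fun s => ?_)
    norm_num
  refine Integrable.mono' hg ((contOn_aux a n).aestronglyMeasurable measurableSet_Ioi) ?_
  rw [ae_restrict_iff' measurableSet_Ioi]
  refine Eventually.of_forall fun s hs => ?_
  have hs0 : (0:ℝ) < s := hs
  have h1 : Real.exp (-s - a/s) = Real.exp (-s) * Real.exp (-(a/s)) := by
    rw [← Real.exp_add]; ring_nf
  have h2 : Real.exp (-(a/s)) ≤ m.factorial * (s/a) ^ m := exp_neg_div_le a s ha hs0 m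
  have h3 : |Real.exp (-s - a/s) * s ^ n| = Real.exp (-s) * Real.exp (-(a/s)) * s ^ n := by
    rw [abs_of_nonneg (by positivity), h1]
  rw [Real.norm_eq_abs, h3]
  have h4 : s ^ ((((m:ℤ) + n : ℤ) : ℝ)) = s ^ m * s ^ n := by
    rw [Real.rpow_intCast, zpow_add₀ hs0.ne', zpow_natCast]
  rw [h4, hC]
  calc Real.exp (-s) * Real.exp (-(a/s)) * s ^ n
      ≤ Real.exp (-s) * (m.factorial * (s/a) ^ m) * s ^ n := by
        apply mul_le_mul_of_nonneg_right (mul_le_mul_of_nonneg_left h2 (Real.exp_pos _).le)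
        positivity
    _ = m.factorial / a ^ m * (Real.exp (-s) * (s ^ m * s ^ n)) := by
        rw [div_pow]; ring

noncomputable def II (n : ℤ) (x : ℝ) : ℝ :=
  ∫ s in Ioi (0:ℝ), Real.exp (-s - x^2/(4*s)) * s ^ n

lemma II_eq (n : ℤ) (x : ℝ) :
    II n x = ∫ s in Ioi (0:ℝ), Real.exp (-s - (x^2/4)/s) * s ^ n := by
  unfold II
  congr 1
  funext s
  rw [div_div]

lemma integrable_II (n : ℤ) (x : ℝ) (hx : 0 < x) :
    IntegrableOn (fun s : ℝ => Real.exp (-s - x^2/(4*s)) * s ^ n) (Ioi 0) := by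
  have := integrable_aux (x^2/4) (by positivity) n
  refine this.congr_fun (fun s _ => ?_) measurableSet_Ioi
  simp only [div_div]

lemma hasDerivAt_deriv_pointwise (n : ℤ) (s : ℝ) (hs : 0 < s) (y : ℝ) :
    HasDerivAt (fun y : ℝ => Real.exp (-s - y^2/(4*s)) * s ^ n)
      (-y/2 * (Real.exp (-s - y^2/(4*s)) * s ^ (n-1))) y := by
  have h1 : HasDerivAt (fun y : ℝ => -s - y^2/(4*s)) (0 - 2*y^1/(4*s)) y :=
    (hasDerivAt_const y (-s)).sub ((hasDerivAt_pow 2 y).div_const (4*s))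
  have h2 := (h1.exp).mul_const ((s:ℝ) ^ n)
  refine h2.congr_deriv ?_
  rw [zpow_sub_one₀ hs.ne']
  field_simp
  ring

lemma hasDerivAt_II (n : ℤ) (x : ℝ) (hx : 0 < x) :
    HasDerivAt (II n) (-x/2 * II (n-1) x) x := by
  have key := hasDerivAt_integral_of_dominated_loc_of_deriv_le
    (μ := volume.restrict (Ioi (0:ℝ))) (x₀ := x)
    (F := fun y s => Real.exp (-s - y^2/(4*s)) * s ^ n)
    (F' := fun y s => -y/2 * (Real.exp (-s - y^2/(4*s)) * s ^ (n-1)))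
    (bound := fun s => (3*x/4) * (Real.exp (-s - (x^2/16)/s) * s ^ (n-1)))
    (s := ball x (x/2)) (ball_mem_nhds x (by positivity))
    (Eventually.of_forall fun y => ?_) (integrable_II n x hx) ?_ ?_ ?_ ?_
  · exact key.2.congr_deriv (by rw [MeasureTheory.integral_const_mul]; rfl)
  · -- measurability of F y
    have : ContinuousOn (fun s : ℝ => Real.exp (-s - y^2/(4*s)) * s ^ n) (Ioi 0) := by
      have := contOn_aux (y^2/4) n
      refine this.congr fun s _ => ?_
      simp only [div_div]
    exact this.aestronglyMeasurable measurableSet_Ioi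
  · -- measurability of F' x
    have : ContinuousOn (fun s : ℝ => -x/2 * (Real.exp (-s - x^2/(4*s)) * s ^ (n-1))) (Ioi 0) := by
      have := (contOn_aux (x^2/4) (n-1)).const_smul (-x/2)
      refine this.congr fun s _ => ?_
      simp [div_div]
    exact this.aestronglyMeasurable measurableSet_Ioi
  · -- bound
    rw [ae_restrict_iff' measurableSet_Ioi]
    refine Eventually.of_forall fun s hs => fun y hy => ?_
    have hs0 : (0:ℝ) < s := hs
    have hy1 : x/2 < y := by
      have := abs_lt.1 (mem_ball_iff_norm.1 hy); linarith [this.1]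
    have hy2 : y < 3*x/2 := by
      have := abs_lt.1 (mem_ball_iff_norm.1 hy); linarith [this.2]
    have hy0 : 0 < y := lt_trans (by positivity) hy1
    have hexp : Real.exp (-s - y^2/(4*s)) ≤ Real.exp (-s - (x^2/16)/s) := by
      apply Real.exp_le_exp.2
      have h1 : x^2/16 ≤ y^2/4 := by nlinarith
      have h2 : (x^2/16)/s ≤ (y^2/4)/s := by gcongr
      have h3 : y^2/(4*s) = (y^2/4)/s := by rw [div_div]
      linarith
    have hp : (0:ℝ) < (s:ℝ) ^ (n-1) := zpow_pos hs0 _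
    have habs : |(-y/2 : ℝ)| = y/2 := by
      rw [abs_of_nonpos (by linarith)]; ring
    have : ‖-y/2 * (Real.exp (-s - y^2/(4*s)) * s ^ (n-1))‖
        = y/2 * (Real.exp (-s - y^2/(4*s)) * s ^ (n-1)) := by
      rw [Real.norm_eq_abs, abs_mul, habs,
        abs_of_nonneg (by positivity : (0:ℝ) ≤ Real.exp (-s - y^2/(4*s)) * s ^ (n-1))]
    rw [this]
    have hle : y/2 ≤ 3*x/4 := by linarith
    calc y/2 * (Real.exp (-s - y^2/(4*s)) * s ^ (n-1))
        ≤ 3*x/4 * (Real.exp (-s - y^2/(4*s)) * s ^ (n-1)) := by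
          apply mul_le_mul_of_nonneg_right hle (by positivity)
      _ ≤ 3*x/4 * (Real.exp (-s - (x^2/16)/s) * s ^ (n-1)) := by
          apply mul_le_mul_of_nonneg_left _ (by positivity)
          exact mul_le_mul_of_nonneg_right hexp hp.le
  · exact ((integrable_aux (x^2/16) (by positivity) (n-1)).const_mul _)
  · rw [ae_restrict_iff' measurableSet_Ioi]
    exact Eventually.of_forall fun s hs => fun y _ => hasDerivAt_deriv_pointwise n s hs y

lemma recurrence (x : ℝ) (hx : 0 < x) :
    x^2/4 * II (-3) x = II (-1) x + II (-2) x := by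
  set h : ℝ → ℝ := fun s => Real.exp (-s - x^2/(4*s)) * s ^ (-1 : ℤ) with hh
  set f' : ℝ → ℝ := fun s =>
    (-(Real.exp (-s - x^2/(4*s)) * s ^ (-1 : ℤ)) - Real.exp (-s - x^2/(4*s)) * s ^ (-2 : ℤ))
      + x^2/4 * (Real.exp (-s - x^2/(4*s)) * s ^ (-3 : ℤ)) with hf'
  have h0 : h 0 = 0 := by
    simp [hh]
  have hderiv : ∀ s ∈ Ioi (0:ℝ), HasDerivAt h (f' s) s := by
    intro s hs
    have hs0 : (0:ℝ) < s := hs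
    have h4s : (4:ℝ) * s ≠ 0 := by positivity
    have hu : HasDerivAt (fun s : ℝ => -s - x^2/(4*s))
        (-1 - (0 * (4*s) - x^2 * (4*1))/(4*s)^2) s :=
      ((hasDerivAt_id s).neg).sub ((hasDerivAt_const s (x^2)).div ((hasDerivAt_id s).const_mul 4) h4s)
    have hzz := (hu.exp).mul (hasDerivAt_zpow (-1) s (Or.inl hs0.ne'))
    refine hzz.congr_deriv ?_
    have e1 : (s:ℝ) ^ (-1:ℤ) = s⁻¹ := by simp
    have e2 : (s:ℝ) ^ (-2:ℤ) = (s^2)⁻¹ := by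
      rw [zpow_neg]; norm_cast
    have e3 : (s:ℝ) ^ (-3:ℤ) = (s^3)⁻¹ := by
      rw [zpow_neg]; norm_cast
    have e4 : (s:ℝ) ^ (-1-1:ℤ) = (s^2)⁻¹ := by
      rw [show (-1-1:ℤ) = -2 by norm_num]; exact e2
    simp only [hf', e1, e2, e3, e4]
    field_simp
    ring
  have hint1 := integrable_II (-1) x hx
  have hint2 := integrable_II (-2) x hx
  have hint3 := integrable_II (-3) x hx
  have hf'int : IntegrableOn f' (Ioi (0:ℝ)) :=
    ((hint1.neg.sub hint2).add (hint3.const_mul (x^2/4)))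
  -- continuity at 0 within Ici 0
  have hcont : ContinuousWithinAt h (Ici (0:ℝ)) 0 := by
    have hC : (0:ℝ) < x^2/4 := by positivity
    have key : ∀ s ∈ Ici (0:ℝ), h s ≤ (2 / (x^2/4)^2) * s := by
      intro s hs
      rcases eq_or_lt_of_le (mem_Ici.1 hs) with rfl | hs0
      · simp [h0]
      have hb : Real.exp (-((x^2/4)/s)) ≤ (Nat.factorial 2 : ℝ) * (s/(x^2/4))^2 :=
        exp_neg_div_le (x^2/4) s hC hs0 2
      have hsplit : Real.exp (-s - x^2/(4*s)) = Real.exp (-s) * Real.exp (-((x^2/4)/s)) := by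
        rw [← Real.exp_add, div_div]; ring_nf
      have hexp1 : Real.exp (-s) ≤ 1 := Real.exp_le_one_iff.2 (by linarith)
      have : h s = Real.exp (-s) * Real.exp (-((x^2/4)/s)) * s⁻¹ := by
        simp only [hh, hsplit]
        congr 1
        simp
      rw [this]
      calc Real.exp (-s) * Real.exp (-((x^2/4)/s)) * s⁻¹
          ≤ 1 * ((Nat.factorial 2 : ℝ) * (s/(x^2/4))^2) * s⁻¹ := by
            apply mul_le_mul_of_nonneg_right _ (by positivity)
            exact mul_le_mul hexp1 hb (Real.exp_pos _).le zero_le_one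
        _ = (2 / (x^2/4)^2) * s := by
            have : (Nat.factorial 2 : ℝ) = 2 := by norm_num [Nat.factorial]
            rw [this, div_pow]
            field_simp
    have key0 : ∀ s ∈ Ici (0:ℝ), 0 ≤ h s := by
      intro s hs
      rcases eq_or_lt_of_le (mem_Ici.1 hs) with rfl | hs0
      · simp [h0]
      · have : (0:ℝ) < s ^ (-1:ℤ) := zpow_pos hs0 _
        positivity
    rw [ContinuousWithinAt, h0]
    have hev1 : ∀ᶠ s in 𝓝[Ici (0:ℝ)] 0, 0 ≤ h s :=
      eventually_mem_nhdsWithin.mono key0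
    have hev2 : ∀ᶠ s in 𝓝[Ici (0:ℝ)] 0, h s ≤ (2 / (x^2/4)^2) * s :=
      eventually_mem_nhdsWithin.mono key
    have hlim : Tendsto (fun s : ℝ => (2 / (x^2/4)^2) * s) (𝓝[Ici (0:ℝ)] 0) (𝓝 0) := by
      have : Tendsto (fun s : ℝ => (2 / (x^2/4)^2) * s) (𝓝 0) (𝓝 ((2 / (x^2/4)^2) * 0)) :=
        (continuous_const.mul continuous_id).tendsto 0
      simpa using this.mono_left nhdsWithin_le_nhds
    exact tendsto_of_tendsto_of_tendsto_of_le_of_le' tendsto_const_nhds hlim hev1 hev2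
  -- limit at infinity
  have htop : Tendsto h atTop (𝓝 0) := by
    have hev1 : ∀ᶠ s in atTop, 0 ≤ h s := by
      filter_upwards [eventually_gt_atTop (0:ℝ)] with s hs0
      have : (0:ℝ) < s ^ (-1:ℤ) := zpow_pos hs0 _
      positivity
    have hev2 : ∀ᶠ s in atTop, h s ≤ Real.exp (-s) := by
      filter_upwards [eventually_ge_atTop (1:ℝ)] with s hs1
      have hs0 : (0:ℝ) < s := by linarith
      have h1 : (s:ℝ) ^ (-1:ℤ) ≤ 1 := by
        rw [zpow_neg, zpow_one]
        rw [inv_le_one_iff₀]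
        right; linarith
      have h2 : Real.exp (-s - x^2/(4*s)) ≤ Real.exp (-s) := by
        apply Real.exp_le_exp.2
        have : 0 ≤ x^2/(4*s) := by positivity
        linarith
      calc h s ≤ Real.exp (-s - x^2/(4*s)) * 1 :=
            mul_le_mul_of_nonneg_left h1 (Real.exp_pos _).le
        _ ≤ Real.exp (-s) := by rw [mul_one]; exact h2
    exact tendsto_of_tendsto_of_tendsto_of_le_of_le' tendsto_const_nhds
      (Real.tendsto_exp_neg_atTop_nhds_zero) hev1 hev2
  have hFTC := integral_Ioi_of_hasDerivAt_of_tendsto hcont hderiv hf'int htop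
  rw [h0, sub_zero] at hFTC
  have hsplit : ∫ s in Ioi (0:ℝ), f' s
      = (-(II (-1) x) - II (-2) x) + x^2/4 * II (-3) x := by
    have e1 : ∫ s in Ioi (0:ℝ), f' s
        = (∫ s in Ioi (0:ℝ), (-(Real.exp (-s - x^2/(4*s)) * s ^ (-1:ℤ))
            - Real.exp (-s - x^2/(4*s)) * s ^ (-2:ℤ)))
          + ∫ s in Ioi (0:ℝ), x^2/4 * (Real.exp (-s - x^2/(4*s)) * s ^ (-3:ℤ)) :=
      MeasureTheory.integral_add (hint1.neg.sub hint2) (hint3.const_mul (x^2/4))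
    have e2 : ∫ s in Ioi (0:ℝ), (-(Real.exp (-s - x^2/(4*s)) * s ^ (-1:ℤ))
            - Real.exp (-s - x^2/(4*s)) * s ^ (-2:ℤ))
        = (∫ s in Ioi (0:ℝ), -(Real.exp (-s - x^2/(4*s)) * s ^ (-1:ℤ)))
          - ∫ s in Ioi (0:ℝ), Real.exp (-s - x^2/(4*s)) * s ^ (-2:ℤ) :=
      MeasureTheory.integral_sub hint1.neg hint2
    have e3 : ∫ s in Ioi (0:ℝ), -(Real.exp (-s - x^2/(4*s)) * s ^ (-1:ℤ))
        = -∫ s in Ioi (0:ℝ), Real.exp (-s - x^2/(4*s)) * s ^ (-1:ℤ) :=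
      MeasureTheory.integral_neg _
    rw [e1, e2, e3, MeasureTheory.integral_const_mul]
    rfl
  rw [hsplit] at hFTC
  linarith

lemma besselK_zero (x : ℝ) : besselK 0 x = 1/2 * II (-1) x := by
  unfold besselK II
  have hi : ∀ s : ℝ, Real.exp (-s - x^2/(4*s)) * s ^ (-(0:ℝ)-1)
      = Real.exp (-s - x^2/(4*s)) * s ^ (-1:ℤ) := by
    intro s
    congr 1
    rw [show (-(0:ℝ) - 1) = ((-1 : ℤ) : ℝ) by norm_num, Real.rpow_intCast]
  rw [Real.rpow_zero, show ((0:ℝ)+1) = 1 by norm_num, Real.rpow_one]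
  simp only [hi]

lemma besselK_one (x : ℝ) : besselK 1 x = x/4 * II (-2) x := by
  unfold besselK II
  have hi : ∀ s : ℝ, Real.exp (-s - x^2/(4*s)) * s ^ (-(1:ℝ)-1)
      = Real.exp (-s - x^2/(4*s)) * s ^ (-2:ℤ) := by
    intro s
    congr 1
    rw [show (-(1:ℝ) - 1) = ((-2 : ℤ) : ℝ) by norm_num, Real.rpow_intCast]
  rw [Real.rpow_one, show ((1:ℝ)+1) = ((2:ℕ):ℝ) by norm_num, Real.rpow_natCast]
  simp only [hi]
  norm_num

lemma hasDerivAt_K0 (x : ℝ) (hx : 0 < x) :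
    HasDerivAt (besselK 0) (-(besselK 1 x)) x := by
  have h := (hasDerivAt_II (-1) x hx).const_mul (1/2 : ℝ)
  have heq : (fun y => (1:ℝ)/2 * II (-1) y) = besselK 0 := by
    funext y; rw [besselK_zero]
  rw [heq] at h
  refine h.congr_deriv ?_
  rw [besselK_one, show (-1-1 : ℤ) = -2 by norm_num]
  ring

lemma hasDerivAt_K1 (x : ℝ) (hx : 0 < x) :
    HasDerivAt (besselK 1) (-(besselK 0 x) - besselK 1 x / x) x := by
  have h := ((hasDerivAt_id x).div_const 4).mul (hasDerivAt_II (-2) x hx)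
  simp only [id_eq, Pi.mul_def] at h
  have heq : (fun y => y/4 * II (-2) y) = besselK 1 := by
    funext y; rw [besselK_one]
  rw [heq] at h
  refine h.congr_deriv ?_
  have hrec := recurrence x hx
  rw [besselK_zero, besselK_one]
  have h32 : (-2 - 1 : ℤ) = -3 := by norm_num
  rw [h32]
  field_simp
  nlinarith [hrec]

/-- `(d/dr) r²[K₀(r)² − K₁(r)²] = 2 r K₀(r)²` for all `r > 0`. -/
theorem stmt1 (x : ℝ) (hx : 0 < x) :
    HasDerivAt (fun r : ℝ => r ^ 2 * ((besselK 0 r) ^ 2 - (besselK 1 r) ^ 2))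
      (2 * x * (besselK 0 x) ^ 2) x := by
  have hK0 := hasDerivAt_K0 x hx
  have hK1 := hasDerivAt_K1 x hx
  have h := (hasDerivAt_pow 2 x).mul ((hK0.pow 2).sub (hK1.pow 2))
  refine h.congr_deriv ?_
  have hx0 : x ≠ 0 := hx.ne'
  simp only [Pi.sub_apply, Pi.pow_apply]
  field_simp
  ring
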